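/- Under Doeblin's condition S_τ μ ≥ α η for all probability measures μ (with α ∈ (0,1), η a probability measure, τ > 0), the map μ ↦ S_τ μ is a contraction on signed measures with zero total mass: for any two probability measures μ₁, μ₂, ‖S_τ μ₁ − S_τ μ₂‖_TV ≤ (1 − α) ‖μ₁ − μ₂‖_TV. -/

import Mathlib

open MeasureTheory Real
open scoped ENNReal

/-- Total variation distance between two finite measures. -/
noncomputable def tvDist {Ω : Type*} [MeasurableSpace Ω] (μ ν : Measure Ω) : ℝ :=
  ⨆ E : {E : Set Ω // MeasurableSet E}, |(μ E.1).toReal - (ν E.1).toReal|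

lemma tvDist_bdd {Ω : Type*} [MeasurableSpace Ω] (μ ν : Measure Ω)
    [IsProbabilityMeasure μ] [IsProbabilityMeasure ν] :
    BddAbove (Set.range fun E : {E : Set Ω // MeasurableSet E} =>
      |(μ E.1).toReal - (ν E.1).toReal|) := by
  refine ⟨1, ?_⟩
  rintro x ⟨E, rfl⟩
  have h1 : (μ E.1).toReal ≤ 1 := by
    simpa using ENNReal.toReal_mono (by simp) (prob_le_one (μ := μ) (s := E.1))
  have h2 : (ν E.1).toReal ≤ 1 := by
    simpa using ENNReal.toReal_mono (by simp) (prob_le_one (μ := ν) (s := E.1))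
  have h3 : 0 ≤ (μ E.1).toReal := ENNReal.toReal_nonneg
  have h4 : 0 ≤ (ν E.1).toReal := ENNReal.toReal_nonneg
  rw [abs_sub_le_iff]; constructor <;> linarith

lemma le_tvDist {Ω : Type*} [MeasurableSpace Ω] (μ ν : Measure Ω)
    [IsProbabilityMeasure μ] [IsProbabilityMeasure ν] {E : Set Ω} (hE : MeasurableSet E) :
    |(μ E).toReal - (ν E).toReal| ≤ tvDist μ ν :=
  le_ciSup (tvDist_bdd μ ν) ⟨E, hE⟩

lemma doeblin_aux {Ω : Type*} [MeasurableSpace Ω]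
    (α : ℝ) (hα0 : 0 < α) (η ν₁ ν₂ : Measure Ω)
    [IsProbabilityMeasure η] [IsProbabilityMeasure ν₁] [IsProbabilityMeasure ν₂]
    (h₁ : ENNReal.ofReal α • η ≤ ν₁) (h₂ : ENNReal.ofReal α • η ≤ ν₂)
    {E : Set Ω} (hE : MeasurableSet E) :
    (ν₁ E).toReal - (ν₂ E).toReal ≤ 1 - α := by
  have key : ∀ (ν : Measure Ω) [IsProbabilityMeasure ν], ENNReal.ofReal α • η ≤ ν → ∀ s : Set Ω,
      α * (η s).toReal ≤ (ν s).toReal := by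
    intro ν _ hν s
    have h := Measure.le_iff'.mp hν s
    rw [Measure.smul_apply, smul_eq_mul] at h
    have := ENNReal.toReal_mono (by finiteness) h
    rwa [ENNReal.toReal_mul, ENNReal.toReal_ofReal hα0.le] at this
  have hsum : ∀ (ν : Measure Ω) [IsProbabilityMeasure ν],
      (ν E).toReal + (ν Eᶜ).toReal = 1 := by
    intro ν _
    rw [← ENNReal.toReal_add (by finiteness) (by finiteness),
      measure_add_measure_compl hE, measure_univ, ENNReal.toReal_one]
  have h1 := key ν₁ h₁ Eᶜ
  have h2 := key ν₂ h₂ E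
  have h3 := hsum ν₁
  have h4 := hsum η
  have h5 : α * (η E).toReal + α * (η Eᶜ).toReal = α := by
    rw [← mul_add, h4, mul_one]
  linarith

/-- Under Doeblin's condition `S τ μ ≥ α η` for all probability
measures `μ`, the map `μ ↦ S τ μ` is a contraction with factor `1 − α` on differences of
probability measures (zero-mass signed measures), in total variation. -/
theorem doeblin_contraction
    {Ω : Type*} [MeasurableSpace Ω]
    (S : ℝ → Measure Ω → Measure Ω)
    (hSlin : ∀ t : ℝ, 0 ≤ t → ∀ (a b : ℝ≥0∞) (μ ν : Measure Ω),
      S t (a • μ + b • ν) = a • S t μ + b • S t ν)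
    (hMarkov : ∀ t : ℝ, 0 ≤ t → ∀ μ : Measure Ω,
      IsProbabilityMeasure μ → IsProbabilityMeasure (S t μ))
    (α : ℝ) (hα : α ∈ Set.Ioo (0:ℝ) 1)
    (η : Measure Ω) [IsProbabilityMeasure η]
    (τ : ℝ) (hτ : 0 < τ)
    (hDoeblin : ∀ μ : Measure Ω, IsProbabilityMeasure μ →
      ENNReal.ofReal α • η ≤ S τ μ) :
    ∀ μ₁ μ₂ : Measure Ω, IsProbabilityMeasure μ₁ → IsProbabilityMeasure μ₂ →
      tvDist (S τ μ₁) (S τ μ₂) ≤ (1 - α) * tvDist μ₁ μ₂ := by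
  intro μ₁ μ₂ h₁ h₂
  obtain ⟨hα0, hα1⟩ := hα
  -- Hahn decomposition for the pair (μ₁, μ₂)
  obtain ⟨A, hA, hA₁, hA₂⟩ := hahn_decomposition (μ := μ₁) (ν := μ₂)
  set κ : Measure Ω := μ₂.restrict A + μ₁.restrict Aᶜ with hκ
  set ρ₁ : Measure Ω := μ₁.restrict A - μ₂.restrict A with hρ₁
  set ρ₂ : Measure Ω := μ₂.restrict Aᶜ - μ₁.restrict Aᶜ with hρ₂
  have hle₁ : μ₂.restrict A ≤ μ₁.restrict A := by
    rw [Measure.le_iff]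
    intro s hs
    rw [Measure.restrict_apply hs, Measure.restrict_apply hs]
    exact hA₁ _ (hs.inter hA) Set.inter_subset_right
  have hle₂ : μ₁.restrict Aᶜ ≤ μ₂.restrict Aᶜ := by
    rw [Measure.le_iff]
    intro s hs
    rw [Measure.restrict_apply hs, Measure.restrict_apply hs]
    exact hA₂ _ (hs.inter hA.compl) Set.inter_subset_right
  have hsum₁ : κ + ρ₁ = μ₁ := by
    rw [hκ, hρ₁, add_right_comm, add_comm (μ₂.restrict A),
      Measure.sub_add_cancel_of_le hle₁, Measure.restrict_add_restrict_compl hA]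
  have hsum₂ : κ + ρ₂ = μ₂ := by
    rw [hκ, hρ₂, add_assoc, add_comm (μ₁.restrict Aᶜ),
      Measure.sub_add_cancel_of_le hle₂, Measure.restrict_add_restrict_compl hA]
  set δ : ℝ≥0∞ := ρ₁ Set.univ with hδ
  have hδ_le_one : δ ≤ 1 := by
    have : (κ + ρ₁) Set.univ = 1 := by rw [hsum₁]; simp
    rw [Measure.add_apply] at this
    calc δ ≤ κ Set.univ + ρ₁ Set.univ := le_add_self
    _ = 1 := this
  have hδ_ne_top : δ ≠ ∞ := (lt_of_le_of_lt hδ_le_one ENNReal.one_lt_top).ne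
  have hκ_ne_top : κ Set.univ ≠ ∞ := by
    have : (κ + ρ₁) Set.univ = 1 := by rw [hsum₁]; simp
    rw [Measure.add_apply] at this
    exact (lt_of_le_of_lt (le_add_right le_rfl) (this ▸ ENNReal.one_lt_top)).ne
  have hδ₂ : ρ₂ Set.univ = δ := by
    have e1 : κ Set.univ + ρ₁ Set.univ = 1 := by
      rw [← Measure.add_apply, hsum₁]; simp
    have e2 : κ Set.univ + ρ₂ Set.univ = 1 := by
      rw [← Measure.add_apply, hsum₂]; simp
    have := e2.trans e1.symm
    exact (ENNReal.add_right_inj hκ_ne_top).mp this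
  -- ρ₁ lives on A, ρ₂ on Aᶜ
  have hρ₁Ac : ρ₁ Aᶜ = 0 := le_antisymm (by
    calc ρ₁ Aᶜ ≤ (μ₁.restrict A) Aᶜ := Measure.sub_le Aᶜ
    _ = 0 := by rw [Measure.restrict_apply hA.compl]; simp) zero_le
  have hρ₂A : ρ₂ A = 0 := le_antisymm (by
    calc ρ₂ A ≤ (μ₂.restrict Aᶜ) A := Measure.sub_le A
    _ = 0 := by rw [Measure.restrict_apply hA]; simp) zero_le
  have hρ₁A : ρ₁ A = δ := by
    have := measure_add_measure_compl (μ := ρ₁) hA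
    rw [hρ₁Ac, add_zero] at this
    exact this
  -- δ.toReal ≤ tvDist μ₁ μ₂
  have hκA_ne_top : κ A ≠ ∞ :=
    (lt_of_le_of_lt (measure_mono (Set.subset_univ A)) hκ_ne_top.lt_top).ne
  have hμ₁A : (μ₁ A).toReal = (κ A).toReal + δ.toReal := by
    rw [← hsum₁, Measure.add_apply, hρ₁A, ENNReal.toReal_add hκA_ne_top hδ_ne_top]
  have hμ₂A : (μ₂ A).toReal = (κ A).toReal := by
    rw [← hsum₂, Measure.add_apply, hρ₂A, add_zero]
  have hδ_le_tv : δ.toReal ≤ tvDist μ₁ μ₂ := by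
    have h := le_tvDist μ₁ μ₂ hA
    rw [hμ₁A, hμ₂A] at h
    simpa [abs_of_nonneg ENNReal.toReal_nonneg] using h
  have htv_nonneg : 0 ≤ tvDist μ₁ μ₂ := le_trans ENNReal.toReal_nonneg hδ_le_tv
  by_cases hδ0 : δ = 0
  · -- then μ₁ = μ₂
    have hρ₁0 : ρ₁ = 0 := Measure.measure_univ_eq_zero.mp hδ0
    have hρ₂0 : ρ₂ = 0 := Measure.measure_univ_eq_zero.mp (hδ₂.trans hδ0)
    have : μ₁ = μ₂ := by rw [← hsum₁, ← hsum₂, hρ₁0, hρ₂0]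
    rw [this] at htv_nonneg ⊢
    have : tvDist (S τ μ₂) (S τ μ₂) = 0 := by
      simp [tvDist, sub_self]
    rw [this]
    exact mul_nonneg (by linarith) htv_nonneg
  · -- normalize
    set σ₁ : Measure Ω := δ⁻¹ • ρ₁ with hσ₁
    set σ₂ : Measure Ω := δ⁻¹ • ρ₂ with hσ₂
    have hp₁ : IsProbabilityMeasure σ₁ := ⟨by
      rw [hσ₁, Measure.smul_apply, smul_eq_mul, ← hδ, ENNReal.inv_mul_cancel hδ0 hδ_ne_top]⟩
    have hp₂ : IsProbabilityMeasure σ₂ := ⟨by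
      rw [hσ₂, Measure.smul_apply, smul_eq_mul, hδ₂, ENNReal.inv_mul_cancel hδ0 hδ_ne_top]⟩
    have hresc : ∀ ρ : Measure Ω, δ • (δ⁻¹ • ρ) = ρ := by
      intro ρ
      rw [smul_smul, ENNReal.mul_inv_cancel hδ0 hδ_ne_top, one_smul]
    have hS₁ : S τ μ₁ = S τ κ + δ • S τ σ₁ := by
      have : μ₁ = (1 : ℝ≥0∞) • κ + δ • σ₁ := by
        rw [one_smul, hσ₁, hresc, hsum₁]
      rw [this, hSlin τ hτ.le 1 δ κ σ₁, one_smul]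
    have hS₂ : S τ μ₂ = S τ κ + δ • S τ σ₂ := by
      have : μ₂ = (1 : ℝ≥0∞) • κ + δ • σ₂ := by
        rw [one_smul, hσ₂, hresc, hsum₂]
      rw [this, hSlin τ hτ.le 1 δ κ σ₂, one_smul]
    have hSp₁ : IsProbabilityMeasure (S τ μ₁) := hMarkov τ hτ.le μ₁ h₁
    have hSp₂ : IsProbabilityMeasure (S τ μ₂) := hMarkov τ hτ.le μ₂ h₂
    have hSρ₁ : IsProbabilityMeasure (S τ σ₁) := hMarkov τ hτ.le σ₁ hp₁
    have hSρ₂ : IsProbabilityMeasure (S τ σ₂) := hMarkov τ hτ.le σ₂ hp₂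
    have hD₁ := hDoeblin σ₁ hp₁
    have hD₂ := hDoeblin σ₂ hp₂
    -- pointwise bound on measurable sets
    have hbound : ∀ E : Set Ω, MeasurableSet E →
        |(S τ μ₁ E).toReal - (S τ μ₂ E).toReal| ≤ δ.toReal * (1 - α) := by
      intro E hE
      have hSκE_ne_top : S τ κ E ≠ ∞ := by
        have hle : S τ κ E ≤ S τ μ₁ E := by
          rw [hS₁, Measure.add_apply]; exact le_add_right le_rfl
        exact (lt_of_le_of_lt hle (by finiteness)).ne
      have happ₁ : (S τ μ₁ E).toReal = (S τ κ E).toReal + δ.toReal * (S τ σ₁ E).toReal := by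
        rw [hS₁, Measure.add_apply, Measure.smul_apply, smul_eq_mul,
          ENNReal.toReal_add hSκE_ne_top (by finiteness), ENNReal.toReal_mul]
      have happ₂ : (S τ μ₂ E).toReal = (S τ κ E).toReal + δ.toReal * (S τ σ₂ E).toReal := by
        rw [hS₂, Measure.add_apply, Measure.smul_apply, smul_eq_mul,
          ENNReal.toReal_add hSκE_ne_top (by finiteness), ENNReal.toReal_mul]
      have hd : (S τ μ₁ E).toReal - (S τ μ₂ E).toReal
          = δ.toReal * ((S τ σ₁ E).toReal - (S τ σ₂ E).toReal) := by
        rw [happ₁, happ₂]; ring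
      have hb₁ : (S τ σ₁ E).toReal - (S τ σ₂ E).toReal ≤ 1 - α :=
        doeblin_aux α hα0 η _ _ hD₁ hD₂ hE
      have hb₂ : (S τ σ₂ E).toReal - (S τ σ₁ E).toReal ≤ 1 - α :=
        doeblin_aux α hα0 η _ _ hD₂ hD₁ hE
      rw [hd, abs_mul, abs_of_nonneg (ENNReal.toReal_nonneg : (0:ℝ) ≤ δ.toReal)]
      refine mul_le_mul_of_nonneg_left ?_ ENNReal.toReal_nonneg
      rw [abs_sub_le_iff]
      exact ⟨hb₁, hb₂⟩
    calc tvDist (S τ μ₁) (S τ μ₂) ≤ δ.toReal * (1 - α) :=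
          ciSup_le fun E => hbound E.1 E.2
      _ = (1 - α) * δ.toReal := by ring
      _ ≤ (1 - α) * tvDist μ₁ μ₂ :=
          mul_le_mul_of_nonneg_left hδ_le_tv (by linarith)
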